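/- Let H be a finite group with [H,H] ⊆ Z(H) (nilpotent of class at most 2), set Z = [H,H], and let χ be a faithful linear character of Z, i.e. an injective group homomorphism Z → ℂ^×. Let τ be an irreducible complex character of H lying over χ, i.e. the restriction of τ to Z equals τ(1)·χ. Then τ(x) = 0 for every x ∈ H ∖ Z(H), and τ(1)² = |H : Z(H)|. -/

import Mathlib

open LinearMap Module
open scoped commutatorElement

section Aux
variable {H : Type*} [Group H] [Fintype H]
variable {W : Type*} [AddCommGroup W] [Module ℂ W] [FiniteDimensional ℂ W] [Nontrivial W]
variable (ρ : Representation ℂ H W)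

omit [Fintype H] in
/-- Schur: an endomorphism commuting with an irreducible rep is scalar. -/
lemma aux_schur (hirr : ∀ U : Submodule ℂ W, (∀ g : H, ∀ w ∈ U, ρ g w ∈ U) → U = ⊥ ∨ U = ⊤)
    (f : W →ₗ[ℂ] W) (hf : ∀ g : H, ρ g ∘ₗ f = f ∘ₗ ρ g) :
    ∃ c : ℂ, f = c • LinearMap.id := by
  obtain ⟨c, hc⟩ := Module.End.exists_eigenvalue f
  refine ⟨c, ?_⟩
  have hinv : ∀ g : H, ∀ w ∈ Module.End.eigenspace f c, ρ g w ∈ Module.End.eigenspace f c := by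
    intro g w hw
    rw [Module.End.mem_eigenspace_iff] at hw ⊢
    calc f (ρ g w) = ρ g (f w) := by
          rw [← LinearMap.comp_apply, ← hf g, LinearMap.comp_apply]
      _ = c • ρ g w := by rw [hw, map_smul]
  rcases hirr _ hinv with h | h
  · exact absurd h (Module.End.hasEigenvalue_iff.mp hc)
  · ext w
    have : w ∈ Module.End.eigenspace f c := h ▸ Submodule.mem_top
    simpa using Module.End.mem_eigenspace_iff.mp this

/-- Averaging a linear map over the group gives a scalar. -/
lemma aux_avg (hirr : ∀ U : Submodule ℂ W, (∀ g : H, ∀ w ∈ U, ρ g w ∈ U) → U = ⊥ ∨ U = ⊤)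
    (A : W →ₗ[ℂ] W) :
    ∃ c : ℂ, (∑ g : H, ρ g * A * ρ g⁻¹) = c • 1 ∧
      c * (finrank ℂ W : ℂ) = (Fintype.card H : ℂ) * LinearMap.trace ℂ W A := by
  set S : W →ₗ[ℂ] W := ∑ g : H, ρ g * A * ρ g⁻¹ with hS
  have hcomm : ∀ h : H, ρ h ∘ₗ S = S ∘ₗ ρ h := by
    intro h
    show ρ h * S = S * ρ h
    rw [hS, Finset.mul_sum, Finset.sum_mul]
    refine Fintype.sum_equiv (Equiv.mulLeft h) _ _ ?_
    intro x
    have h1 : ρ (h * x)⁻¹ * ρ h = ρ x⁻¹ := by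
      rw [← map_mul]; congr 1; group
    calc ρ h * (ρ x * A * ρ x⁻¹)
        = ρ (h * x) * A * ρ x⁻¹ := by rw [map_mul, mul_assoc, mul_assoc, mul_assoc]
      _ = ρ (h * x) * A * (ρ (h * x)⁻¹ * ρ h) := by rw [h1]
      _ = ρ (Equiv.mulLeft h x) * A * ρ ((Equiv.mulLeft h x))⁻¹ * ρ h := by
          simp [mul_assoc]
  obtain ⟨c, hc⟩ := aux_schur ρ hirr S hcomm
  refine ⟨c, by simpa [Module.End.one_eq_id] using hc, ?_⟩
  have htr : LinearMap.trace ℂ W S = (Fintype.card H : ℂ) * LinearMap.trace ℂ W A := by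
    rw [hS, map_sum]
    have : ∀ g : H, LinearMap.trace ℂ W (ρ g * A * ρ g⁻¹) = LinearMap.trace ℂ W A := by
      intro g
      rw [LinearMap.trace_mul_comm, ← mul_assoc, ← map_mul, inv_mul_cancel, map_one, one_mul]
    simp [this, Finset.sum_const, Finset.card_univ]
  rw [hc, map_smul, LinearMap.trace_id, smul_eq_mul] at htr
  exact htr.symm ▸ htr

/-- The key orthogonality relation for a single irreducible character. -/
lemma aux_orth (hirr : ∀ U : Submodule ℂ W, (∀ g : H, ∀ w ∈ U, ρ g w ∈ U) → U = ⊥ ∨ U = ⊤) :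
    ∑ g : H, LinearMap.trace ℂ W (ρ g) * LinearMap.trace ℂ W (ρ g⁻¹)
      = (Fintype.card H : ℂ) := by
  classical
  set n := finrank ℂ W with hn
  have hn0 : (n : ℂ) ≠ 0 := by
    have : 0 < n := finrank_pos
    exact_mod_cast this.ne'
  let b : Basis (Fin n) ℂ W := Module.finBasis ℂ W
  let E := LinearMap.toMatrixAlgEquiv b
  let R : H → Matrix (Fin n) (Fin n) ℂ := fun g => E (ρ g)
  have htr : ∀ g : H, LinearMap.trace ℂ W (ρ g) = (R g).trace := fun g =>
    LinearMap.trace_eq_matrix_trace ℂ b _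
  have key : ∀ i j : Fin n, (∑ g : H, (R g) i i * (R g⁻¹) j j)
      = if i = j then (Fintype.card H : ℂ) / n else 0 := by
    intro i j
    obtain ⟨c, hc1, hc2⟩ := aux_avg ρ hirr (E.symm (Matrix.single i j 1))
    have hmat : (∑ g : H, R g * Matrix.single i j 1 * R g⁻¹)
        = c • (1 : Matrix (Fin n) (Fin n) ℂ) := by
      have := congrArg E hc1
      simpa [map_sum, map_mul, map_smul, map_one, R] using this
    have hentry : ((∑ g : H, R g * Matrix.single i j 1 * R g⁻¹ :
          Matrix (Fin n) (Fin n) ℂ)) i j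
        = ∑ g : H, (R g) i i * (R g⁻¹) j j := by
      rw [Matrix.sum_apply]
      refine Finset.sum_congr rfl fun g _ => ?_
      have hEB : ∀ k, ((Matrix.single i j 1 * R g⁻¹ :
            Matrix (Fin n) (Fin n) ℂ)) k j
          = if k = i then R g⁻¹ j j else 0 := by
        intro k
        simp [Matrix.mul_apply, Matrix.single, ite_and, eq_comm]
      rw [mul_assoc, Matrix.mul_apply]
      simp only [hEB, mul_ite, mul_zero, Finset.sum_ite_eq', Finset.mem_univ, if_true]
    have htrE : ∀ f : W →ₗ[ℂ] W, LinearMap.trace ℂ W f = (E f).trace := by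
      intro f
      rw [LinearMap.trace_eq_matrix_trace ℂ b]
      rfl
    have htrA : LinearMap.trace ℂ W (E.symm (Matrix.single i j 1))
        = if i = j then 1 else 0 := by
      rw [htrE, E.apply_symm_apply]
      by_cases hij : i = j
      · subst hij; simp [Matrix.trace_single_eq_same]
      · simp [hij, Matrix.trace_single_eq_of_ne i j (1 : ℂ) hij]
    have hsum : ∑ g : H, (R g) i i * (R g⁻¹) j j = c * (if i = j then 1 else 0) := by
      rw [← hentry, hmat, Matrix.smul_apply, Matrix.one_apply, smul_eq_mul]
    rw [htrA, ← hn] at hc2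
    rw [hsum]
    by_cases hij : i = j
    · simp only [hij, if_true, mul_one] at hc2 ⊢
      field_simp
      linear_combination hc2
    · simp only [hij, if_false, mul_zero]
  calc ∑ g : H, LinearMap.trace ℂ W (ρ g) * LinearMap.trace ℂ W (ρ g⁻¹)
      = ∑ g : H, ∑ i : Fin n, ∑ j : Fin n, (R g) i i * (R g⁻¹) j j := by
        refine Finset.sum_congr rfl fun g _ => ?_
        rw [htr, htr, Matrix.trace, Matrix.trace, Finset.sum_mul_sum]
        rfl
    _ = ∑ i : Fin n, ∑ j : Fin n, ∑ g : H, (R g) i i * (R g⁻¹) j j := by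
        rw [Finset.sum_comm]
        exact Finset.sum_congr rfl fun i _ => Finset.sum_comm
    _ = ∑ i : Fin n, (Fintype.card H : ℂ) / n := by
        refine Finset.sum_congr rfl fun i _ => ?_
        rw [Finset.sum_congr rfl fun j _ => key i j]
        simp
    _ = (Fintype.card H : ℂ) := by
        rw [Finset.sum_const, Finset.card_univ, Fintype.card_fin, nsmul_eq_mul]
        field_simp

end Aux

/-- Let `H` be a finite group with `[H,H] ⊆ Z(H)`, `Z = [H,H]`, and let
`χ` be a faithful linear character of `Z`. If `τ` is the character of an irreducible
complex representation `ρ` of `H` lying over `χ` (i.e. `τ(z) = τ(1)·χ(z)` for `z ∈ Z`),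
then `τ(x) = 0` for every `x ∈ H ∖ Z(H)`, and `τ(1)² = |H : Z(H)|`. -/
theorem character_vanishes_off_center_and_degree_squared
    (H : Type*) [Group H] [Fintype H]
    (hHZ : commutator H ≤ Subgroup.center H)
    (χ : ↥(commutator H) →* ℂˣ) (hχ : Function.Injective χ)
    (W : Type*) [AddCommGroup W] [Module ℂ W] [FiniteDimensional ℂ W] [Nontrivial W]
    (ρ : Representation ℂ H W)
    (hirr : ∀ U : Submodule ℂ W, (∀ g : H, ∀ w ∈ U, ρ g w ∈ U) → U = ⊥ ∨ U = ⊤)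
    (hover : ∀ (z : H) (hz : z ∈ commutator H),
      LinearMap.trace ℂ W (ρ z) = LinearMap.trace ℂ W (ρ 1) * (χ ⟨z, hz⟩ : ℂ)) :
    (∀ x : H, x ∉ Subgroup.center H → LinearMap.trace ℂ W (ρ x) = 0) ∧
    (LinearMap.trace ℂ W (ρ 1)) ^ 2 = ((Subgroup.center H).index : ℂ) := by
  classical
  have hn : LinearMap.trace ℂ W (ρ 1) = (finrank ℂ W : ℂ) := by
    rw [map_one]; exact LinearMap.trace_one ℂ W
  have hnne : ((finrank ℂ W : ℕ) : ℂ) ≠ 0 := by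
    have : 0 < finrank ℂ W := finrank_pos
    exact_mod_cast this.ne'
  -- elements of the center act by scalars
  have hcent : ∀ z ∈ Subgroup.center H, ∃ c : ℂ, ρ z = c • (1 : W →ₗ[ℂ] W) := by
    intro z hz
    have := aux_schur ρ hirr (ρ z) ?_
    · simpa [Module.End.one_eq_id] using this
    intro g
    show ρ g * ρ z = ρ z * ρ g
    rw [← map_mul, ← map_mul, Subgroup.mem_center_iff.mp hz g]
  have htr_smul : ∀ c : ℂ, LinearMap.trace ℂ W (c • (1 : W →ₗ[ℂ] W))
      = c * (finrank ℂ W : ℂ) := by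
    intro c
    rw [map_smul, LinearMap.trace_one, smul_eq_mul]
  -- the vanishing statement
  have hvan : ∀ x : H, x ∉ Subgroup.center H → LinearMap.trace ℂ W (ρ x) = 0 := by
    intro x hx
    obtain ⟨g, hg⟩ : ∃ g : H, g * x ≠ x * g := by
      by_contra h
      push_neg at h
      exact hx (Subgroup.mem_center_iff.mpr fun g => h g)
    have hcmem : ⁅g, x⁆ ∈ commutator H := by
      rw [commutator_def]
      exact Subgroup.commutator_mem_commutator (Subgroup.mem_top g) (Subgroup.mem_top x)
    have hcne : ⁅g, x⁆ ≠ 1 := fun h => hg (commutatorElement_eq_one_iff_mul_comm.mp h)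
    obtain ⟨c, hc⟩ := hcent ⁅g, x⁆ (hHZ hcmem)
    have h2 := hover ⁅g, x⁆ hcmem
    rw [hn, hc, htr_smul] at h2
    have hcχ : c = (χ ⟨⁅g, x⁆, hcmem⟩ : ℂ) :=
      mul_right_cancel₀ hnne (h2.trans (mul_comm _ _))
    have hχne : (χ ⟨⁅g, x⁆, hcmem⟩ : ℂ) ≠ 1 := by
      intro h
      apply hcne
      have h1 : χ ⟨⁅g, x⁆, hcmem⟩ = 1 := Units.ext (by simpa using h)
      have h2' : (⟨⁅g, x⁆, hcmem⟩ : ↥(commutator H)) = 1 := hχ (h1.trans (map_one χ).symm)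
      exact Subtype.ext_iff.mp h2'
    have hconj : g * x * g⁻¹ = ⁅g, x⁆ * x := by
      rw [commutatorElement_def]; group
    have t1 : LinearMap.trace ℂ W (ρ (g * x * g⁻¹)) = LinearMap.trace ℂ W (ρ x) := by
      rw [mul_assoc, map_mul ρ g (x * g⁻¹), LinearMap.trace_mul_comm,
        ← map_mul ρ (x * g⁻¹) g]
      congr 2
      group
    have t2 : LinearMap.trace ℂ W (ρ (⁅g, x⁆ * x)) =
        (χ ⟨⁅g, x⁆, hcmem⟩ : ℂ) * LinearMap.trace ℂ W (ρ x) := by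
      rw [map_mul ρ ⁅g, x⁆ x, hc, hcχ, smul_mul_assoc, one_mul, map_smul, smul_eq_mul]
    have hfix : LinearMap.trace ℂ W (ρ x) =
        (χ ⟨⁅g, x⁆, hcmem⟩ : ℂ) * LinearMap.trace ℂ W (ρ x) := by
      conv_lhs => rw [← t1, hconj, t2]
    by_contra hne
    exact hχne (mul_right_cancel₀ hne (hfix.symm.trans (one_mul _).symm))
  refine ⟨hvan, ?_⟩
  -- the degree statement
  have horth := aux_orth ρ hirr
  have hterm : ∀ g : H, LinearMap.trace ℂ W (ρ g) * LinearMap.trace ℂ W (ρ g⁻¹)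
      = if g ∈ Subgroup.center H then ((finrank ℂ W : ℂ)) ^ 2 else 0 := by
    intro g
    by_cases hg : g ∈ Subgroup.center H
    · obtain ⟨c, hc⟩ := hcent g hg
      obtain ⟨d, hd⟩ := hcent g⁻¹ (inv_mem hg)
      have hone : ρ g * ρ g⁻¹ = 1 := by rw [← map_mul, mul_inv_cancel, map_one]
      rw [hc, hd, smul_mul_assoc, one_mul, smul_smul] at hone
      have hcd1 : c * d = 1 := by
        have h := congrArg (LinearMap.trace ℂ W) hone
        rw [htr_smul, LinearMap.trace_one] at h
        exact mul_right_cancel₀ hnne (h.trans (one_mul _).symm)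
      rw [hc, hd, htr_smul, htr_smul, if_pos hg]
      calc c * (finrank ℂ W : ℂ) * (d * (finrank ℂ W : ℂ))
          = (c * d) * (finrank ℂ W : ℂ) ^ 2 := by ring
        _ = (finrank ℂ W : ℂ) ^ 2 := by rw [hcd1, one_mul]
    · rw [hvan g hg, zero_mul, if_neg hg]
  rw [Finset.sum_congr rfl fun g _ => hterm g, Finset.sum_ite, Finset.sum_const,
    Finset.sum_const, smul_zero, add_zero] at horth
  have hcard : (Finset.univ.filter (fun g : H => g ∈ Subgroup.center H)).card
      = Fintype.card (Subgroup.center H) := (Fintype.card_subtype _).symm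
  rw [hcard, nsmul_eq_mul] at horth
  have hindex : (Subgroup.center H).index * Fintype.card (Subgroup.center H)
      = Fintype.card H := by
    have := Subgroup.index_mul_card (Subgroup.center H)
    simpa [Nat.card_eq_fintype_card] using this
  have hZ0 : ((Fintype.card (Subgroup.center H) : ℕ) : ℂ) ≠ 0 := by
    exact_mod_cast Fintype.card_pos.ne'
  rw [hn]
  apply mul_left_cancel₀ hZ0
  rw [horth, ← hindex]
  push_cast
  ring
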